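/- Let g be C¹ on (-ε,ε) with g(0)=0 and g'(0)=λ²>0, G(x)=∫₀ˣ g(u)du, and X defined by X(x)²=2G(x), x·X(x)>0 for x≠0. Then X is C¹ in a neighborhood of 0 and X'(0)=λ. -/

import Mathlib

open Set Filter Topology

theorem stmt_1 (ε lam : ℝ) (hε : 0 < ε) (hlam : 0 < lam)
    (g G X : ℝ → ℝ)
    (hg : ContDiffOn ℝ 1 g (Ioo (-ε) ε))
    (hg0 : g 0 = 0) (hg'0 : deriv g 0 = lam ^ 2)
    (hG : ∀ x, G x = ∫ u in (0:ℝ)..x, g u)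
    (hXcont : ∀ᶠ x in nhds (0:ℝ), ContinuousAt X x)
    (hX2 : ∀ᶠ x in nhds (0:ℝ), (X x) ^ 2 = 2 * G x)
    (hXsgn : ∀ᶠ x in nhds (0:ℝ), x ≠ 0 → 0 < x * X x) :
    ∃ δ > 0, ContDiffOn ℝ 1 X (Ioo (-δ) δ) ∧ deriv X 0 = lam := by
  have h0mem : (0:ℝ) ∈ Ioo (-ε) ε := ⟨by linarith, hε⟩
  have hopen : IsOpen (Ioo (-ε) ε) := isOpen_Ioo
  have hnbhd : Ioo (-ε) ε ∈ 𝓝 (0:ℝ) := hopen.mem_nhds h0mem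
  have hgc : ContinuousOn g (Ioo (-ε) ε) := hg.continuousOn
  have hgca : ∀ x ∈ Ioo (-ε) ε, ContinuousAt g x := fun x hx =>
    hgc.continuousAt (hopen.mem_nhds hx)
  -- derivative of g at 0
  have hgd0 : HasDerivAt g (lam ^ 2) 0 := by
    have hd : DifferentiableAt ℝ g 0 :=
      (hg.contDiffAt hnbhd).differentiableAt one_ne_zero
    simpa [hg'0] using hd.hasDerivAt
  -- (A) slope of g tends to lam^2
  have hA : Tendsto (fun x => g x / x) (𝓝[≠] (0:ℝ)) (𝓝 (lam ^ 2)) := by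
    have h := hasDerivAt_iff_tendsto_slope.1 hgd0
    exact h.congr fun x => by simp [slope_def_field, hg0]
  -- derivative of G
  have hGd : ∀ x ∈ Ioo (-ε) ε, HasDerivAt G (g x) x := by
    intro x hx
    have hsub : uIcc (0:ℝ) x ⊆ Ioo (-ε) ε :=
      (ordConnected_Ioo).uIcc_subset h0mem hx
    have hint : IntervalIntegrable g MeasureTheory.volume 0 x :=
      (hgc.mono hsub).intervalIntegrable
    have hmeas : StronglyMeasurableAtFilter g (𝓝 x) MeasureTheory.volume :=
      ContinuousOn.stronglyMeasurableAtFilter hopen hgc x hx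
    have h := intervalIntegral.integral_hasDerivAt_right hint hmeas (hgca x hx)
    have hGfun : G = fun y => ∫ u in (0:ℝ)..y, g u := funext hG
    rw [hGfun]
    exact h
  have hG0 : G 0 = 0 := by simp [hG 0]
  -- (B) via L'Hopital
  have hB : Tendsto (fun x => 2 * G x / x ^ 2) (𝓝[≠] (0:ℝ)) (𝓝 (lam ^ 2)) := by
    have hne : ∀ᶠ x in 𝓝[≠] (0:ℝ), x ≠ 0 :=
      eventually_mem_nhdsWithin.mono fun x hx => hx
    refine HasDerivAt.lhopital_zero_nhdsNE (f' := fun x => 2 * g x)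
      (g' := fun x => 2 * x) ?_ ?_ ?_ ?_ ?_ ?_
    · filter_upwards [mem_nhdsWithin_of_mem_nhds hnbhd] with x hx
      exact (hGd x hx).const_mul 2
    · filter_upwards with x
      simpa using hasDerivAt_pow 2 x
    · filter_upwards [hne] with x hx
      exact mul_ne_zero two_ne_zero hx
    · have hc : ContinuousAt (fun x => 2 * G x) 0 :=
        continuousAt_const.mul (hGd 0 h0mem).continuousAt
      have := hc.continuousWithinAt (s := {(0:ℝ)}ᶜ)
      simpa [ContinuousWithinAt, hG0] using this
    · have h : Tendsto (fun x : ℝ => x ^ 2) (𝓝 0) (𝓝 ((0:ℝ) ^ 2)) :=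
        (continuous_pow 2).continuousAt
      exact tendsto_nhdsWithin_of_tendsto_nhds (by simpa using h)
    · refine hA.congr fun x => ?_
      rw [mul_div_mul_left _ _ (two_ne_zero)]
  -- g has the right sign near 0
  have hgpos : ∀ᶠ x in 𝓝 (0:ℝ), x ≠ 0 → 0 < g x * x := by
    have h1 : ∀ᶠ x in 𝓝[≠] (0:ℝ), 0 < g x / x :=
      hA.eventually (eventually_gt_nhds (by positivity))
    rw [eventually_nhdsWithin_iff] at h1
    filter_upwards [h1] with x hx hxne
    have h2 := hx hxne
    have h3 : g x * x = (g x / x) * x ^ 2 := by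
      field_simp
    rw [h3]
    exact mul_pos h2 (pow_two_pos_of_ne_zero hxne)
  -- gather eventual facts and choose δ
  have hev : ∀ᶠ x in 𝓝 (0:ℝ), ContinuousAt X x ∧ X x ^ 2 = 2 * G x ∧
      (x ≠ 0 → 0 < x * X x) ∧ x ∈ Ioo (-ε) ε ∧ (x ≠ 0 → 0 < g x * x) := by
    filter_upwards [hXcont, hX2, hXsgn, hnbhd, hgpos] with x h1 h2 h3 h4 h5
    exact ⟨h1, h2, h3, h4, h5⟩
  obtain ⟨δ, hδpos, hδ⟩ := Metric.eventually_nhds_iff.mp hev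
  have hball : ∀ x ∈ Ioo (-δ) δ, ContinuousAt X x ∧ X x ^ 2 = 2 * G x ∧
      (x ≠ 0 → 0 < x * X x) ∧ x ∈ Ioo (-ε) ε ∧ (x ≠ 0 → 0 < g x * x) := by
    intro x hx
    refine hδ ?_
    rw [Real.dist_eq, sub_zero]
    exact abs_lt.mpr ⟨hx.1, hx.2⟩
  have h0δ : (0:ℝ) ∈ Ioo (-δ) δ := ⟨by linarith, hδpos⟩
  have hX0 : X 0 = 0 := by
    have h := (hball 0 h0δ).2.1
    rw [hG0] at h
    simpa [pow_eq_zero_iff] using h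
  -- positivity of G
  have hGpos : ∀ x ∈ Ioo (-δ) δ, x ≠ 0 → 0 < G x := by
    intro x hx hxne
    have hxε := (hball x hx).2.2.2.1
    have hsub : uIcc (0:ℝ) x ⊆ Ioo (-ε) ε := (ordConnected_Ioo).uIcc_subset h0mem hxε
    rcases lt_or_gt_of_ne hxne with hneg | hpos
    · have hint : IntervalIntegrable g MeasureTheory.volume x 0 :=
        ((hgc.mono (by rwa [uIcc_comm] at hsub)).intervalIntegrable)
      have hposn : ∀ u ∈ Ioo x 0, 0 < -g u := by
        intro u hu
        have hus : u ∈ Ioo (-δ) δ := ⟨lt_trans hx.1 hu.1, lt_trans hu.2 hδpos⟩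
        have h := (hball u hus).2.2.2.2 (ne_of_lt hu.2)
        nlinarith [hu.2]
      have h1 : 0 < ∫ u in x..0, -g u :=
        intervalIntegral.intervalIntegral_pos_of_pos_on hint.neg hposn hneg
      have h2 : (∫ u in x..0, -g u) = ∫ u in (0:ℝ)..x, g u := by
        rw [intervalIntegral.integral_neg, intervalIntegral.integral_symm, neg_neg]
      rw [hG x, ← h2]
      exact h1
    · have hint : IntervalIntegrable g MeasureTheory.volume 0 x :=
        (hgc.mono hsub).intervalIntegrable
      have hposn : ∀ u ∈ Ioo 0 x, 0 < g u := by
        intro u hu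
        have hus : u ∈ Ioo (-δ) δ := ⟨lt_trans (neg_lt_zero.mpr hδpos) hu.1, lt_trans hu.2 hx.2⟩
        have h := (hball u hus).2.2.2.2 (ne_of_gt hu.1)
        nlinarith [hu.1]
      rw [hG x]
      exact intervalIntegral.intervalIntegral_pos_of_pos_on hint hposn hpos
  -- explicit formula for X
  have hXposf : ∀ x ∈ Ioo (-δ) δ, 0 < x → X x = Real.sqrt (2 * G x) := by
    intro x hx hxpos
    have h1 : (0:ℝ) < x * X x := (hball x hx).2.2.1 (ne_of_gt hxpos)
    have h2 : 0 < X x := by nlinarith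
    rw [← (hball x hx).2.1, Real.sqrt_sq h2.le]
  have hXnegf : ∀ x ∈ Ioo (-δ) δ, x < 0 → X x = -Real.sqrt (2 * G x) := by
    intro x hx hxneg
    have h1 : (0:ℝ) < x * X x := (hball x hx).2.2.1 (ne_of_lt hxneg)
    have h2 : X x < 0 := by nlinarith
    rw [← (hball x hx).2.1, Real.sqrt_sq_eq_abs, abs_of_neg h2, neg_neg]
  -- derivative of X off 0
  have hXder : ∀ x ∈ Ioo (-δ) δ, x ≠ 0 → HasDerivAt X (g x / X x) x := by
    intro x hx hxne
    have hxε := (hball x hx).2.2.2.1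
    have hGx : 0 < 2 * G x := by have := hGpos x hx hxne; linarith
    have hsqrtpos : 0 < Real.sqrt (2 * G x) := Real.sqrt_pos.mpr hGx
    have hsq : HasDerivAt (fun y => Real.sqrt (2 * G y))
        (1 / (2 * Real.sqrt (2 * G x)) * (2 * g x)) x :=
      (Real.hasDerivAt_sqrt (ne_of_gt hGx)).comp x ((hGd x hxε).const_mul 2)
    rcases lt_or_gt_of_ne hxne with hneg | hpos
    · have hevx : X =ᶠ[𝓝 x] fun y => -Real.sqrt (2 * G y) := by
        filter_upwards [isOpen_Ioo.mem_nhds (show x ∈ Ioo (-δ) 0 from ⟨hx.1, hneg⟩)] with y hy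
        exact hXnegf y ⟨hy.1, lt_trans hy.2 hδpos⟩ hy.2
      have hd := hsq.neg.congr_of_eventuallyEq hevx
      refine hd.congr_deriv ?_
      rw [hXnegf x hx hneg]
      field_simp
    · have hevx : X =ᶠ[𝓝 x] fun y => Real.sqrt (2 * G y) := by
        filter_upwards [isOpen_Ioo.mem_nhds (show x ∈ Ioo 0 δ from ⟨hpos, hx.2⟩)] with y hy
        exact hXposf y ⟨lt_trans (neg_lt_zero.mpr hδpos) hy.1, hy.2⟩ hy.1
      have hd := hsq.congr_of_eventuallyEq hevx
      refine hd.congr_deriv ?_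
      rw [hXposf x hx hpos]
      field_simp
  -- (C) slope of X tends to lam
  have hδnbhd : Ioo (-δ) δ ∈ 𝓝[≠] (0:ℝ) :=
    mem_nhdsWithin_of_mem_nhds (isOpen_Ioo.mem_nhds h0δ)
  have hC : Tendsto (fun x => X x / x) (𝓝[≠] (0:ℝ)) (𝓝 lam) := by
    have hsqt : Tendsto (fun x => Real.sqrt (2 * G x / x ^ 2)) (𝓝[≠] (0:ℝ)) (𝓝 lam) := by
      have h := (Real.continuous_sqrt.continuousAt (x := lam ^ 2)).tendsto.comp hB
      simpa [Real.sqrt_sq hlam.le, Function.comp_def] using h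
    refine hsqt.congr' ?_
    filter_upwards [hδnbhd, eventually_mem_nhdsWithin] with x hxs hxne
    have hxne' : x ≠ 0 := hxne
    have h2 : 2 * G x / x ^ 2 = (X x / x) ^ 2 := by
      rw [← (hball x hxs).2.1, div_pow]
    have h3 : 0 < X x / x := by
      have h1 := (hball x hxs).2.2.1 hxne'
      have h4 : X x / x = x * X x / x ^ 2 := by
        rw [pow_two, mul_div_mul_left _ _ hxne']
      rw [h4]
      exact div_pos h1 (pow_two_pos_of_ne_zero hxne')
    rw [h2, Real.sqrt_sq h3.le]
  have hD : HasDerivAt X lam 0 := by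
    rw [hasDerivAt_iff_tendsto_slope]
    exact hC.congr fun x => by simp [slope_def_field, hX0]
  -- continuity of deriv X
  have hderivx : ∀ x ∈ Ioo (-δ) δ, x ≠ 0 → deriv X x = g x / X x :=
    fun x hx hxne => (hXder x hx hxne).deriv
  have hXne : ∀ x ∈ Ioo (-δ) δ, x ≠ 0 → X x ≠ 0 := by
    intro x hx hxne h
    have h1 := (hball x hx).2.2.1 hxne
    rw [h, mul_zero] at h1
    exact lt_irrefl 0 h1
  have hcontd : ContinuousOn (deriv X) (Ioo (-δ) δ) := by
    intro x hx
    rcases eq_or_ne x 0 with rfl | hxne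
    · apply ContinuousAt.continuousWithinAt
      rw [← continuousWithinAt_compl_self, ContinuousWithinAt, hD.deriv]
      have hq : Tendsto (fun y => (g y / y) / (X y / y)) (𝓝[≠] (0:ℝ)) (𝓝 (lam ^ 2 / lam)) :=
        hA.div hC (ne_of_gt hlam)
      have hlamq : lam ^ 2 / lam = lam := by
        field_simp [pow_two]
      rw [hlamq] at hq
      refine hq.congr' ?_
      filter_upwards [hδnbhd, eventually_mem_nhdsWithin] with y hy hyne
      have hyne' : y ≠ 0 := hyne
      have hXy := hXne y hy hyne'
      rw [hderivx y hy hyne']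
      field_simp
    · apply ContinuousAt.continuousWithinAt
      have hopen' : IsOpen (Ioo (-δ) δ ∩ {(0:ℝ)}ᶜ) := isOpen_Ioo.inter isOpen_compl_singleton
      have hevx : (fun y => g y / X y) =ᶠ[𝓝 x] deriv X := by
        filter_upwards [hopen'.mem_nhds ⟨hx, hxne⟩] with y hy
        exact (hderivx y hy.1 hy.2).symm
      refine ContinuousAt.congr ?_ hevx
      exact (hgca x (hball x hx).2.2.2.1).div (hball x hx).1 (hXne x hx hxne)
  have hdiff : DifferentiableOn ℝ X (Ioo (-δ) δ) := by
    intro x hx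
    rcases eq_or_ne x 0 with rfl | hxne
    · exact hD.differentiableAt.differentiableWithinAt
    · exact (hXder x hx hxne).differentiableAt.differentiableWithinAt
  refine ⟨δ, hδpos, ?_, hD.deriv⟩
  rw [show (1 : WithTop ℕ∞) = 0 + 1 from rfl,
    contDiffOn_succ_iff_deriv_of_isOpen isOpen_Ioo]
  exact ⟨hdiff, by simp, contDiffOn_zero.mpr hcontd⟩
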